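/- In the Hecke algebra H_n(q), define E_i = (1/(q+1))(q − 1 − 2T_i) and expand E₁E₂⋯E_{n−1} · E₁E₂⋯E_{n−2} ⋯ E₁E₂ · E₁ = Σ_{w∈S_n} c_w(q) T_w in the standard basis {T_w}. Then the coefficient of the identity permutation is c_id(q) = ((q−1)/(q+1))^{⌊n/2⌋}. -/

import Mathlib

/-- The Coxeter length (number of inversions) of a permutation of `Fin n`. -/
def invLen {n : ℕ} (u : Equiv.Perm (Fin n)) : ℕ :=
  (Finset.univ.filter (fun p : Fin n × Fin n => p.1 < p.2 ∧ u p.2 < u p.1)).card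

/-- The adjacent transposition `s_{i+1} = (i+1, i+2)` of `Fin n` (0-based `i`). -/
def sgen (n i : ℕ) : Equiv.Perm (Fin n) :=
  if h : i + 1 < n then Equiv.swap ⟨i, Nat.lt_of_succ_lt h⟩ ⟨i + 1, h⟩ else 1

/-- The (0-based) index word of the product `E₁E₂⋯E_{n-1}·E₁E₂⋯E_{n-2}⋯E₁E₂·E₁`. -/
def evacWord (n : ℕ) : List ℕ :=
  (((List.range (n - 1)).reverse).map (fun k => List.range (k + 1))).flatten

section PermLemmas

variable {n : ℕ}

lemma invLen_one : invLen (1 : Equiv.Perm (Fin n)) = 0 := by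
  rw [invLen, Finset.card_eq_zero, Finset.filter_eq_empty_iff]
  rintro ⟨x, y⟩ -
  simp only [Equiv.Perm.one_apply]
  rintro ⟨h1, h2⟩
  exact absurd h1 (not_lt.2 h2.le)

lemma sgen_apply (i : ℕ) (h : i + 1 < n) (x : Fin n) :
    sgen n i x = if x = ⟨i, Nat.lt_of_succ_lt h⟩ then ⟨i+1, h⟩
      else if x = ⟨i+1, h⟩ then ⟨i, Nat.lt_of_succ_lt h⟩ else x := by
  rw [sgen, dif_pos h]
  split_ifs with h1 h2
  · rw [h1, Equiv.swap_apply_left]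
  · rw [h2, Equiv.swap_apply_right]
  · exact Equiv.swap_apply_of_ne_of_ne h1 h2

lemma sgen_inv (i : ℕ) : (sgen n i)⁻¹ = sgen n i := by
  rw [sgen]
  split_ifs with h
  · exact Equiv.swap_inv _ _
  · rfl

lemma sgen_mul_self (i : ℕ) : sgen n i * sgen n i = 1 := by
  rw [sgen]
  split_ifs with h
  · exact Equiv.swap_mul_self _ _
  · exact one_mul 1

/-- order preservation: the adjacent swap preserves order of any pair except (i, i+1). -/
lemma sgen_order (i : ℕ) (h : i + 1 < n) (x y : Fin n) (hxy : x < y)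
    (hne : ¬((x : ℕ) = i ∧ (y : ℕ) = i + 1)) : sgen n i x < sgen n i y := by
  have hi : ((⟨i, Nat.lt_of_succ_lt h⟩ : Fin n) : ℕ) = i := rfl
  rw [sgen_apply i h, sgen_apply i h]
  have hxy' : (x : ℕ) < (y : ℕ) := hxy
  split_ifs with h1 h2 h3 h4 h5 <;>
    simp only [Fin.ext_iff, Fin.lt_def] at * <;> omega

lemma descent_up (i : ℕ) (h : i + 1 < n) (u : Equiv.Perm (Fin n))
    (hu : u ⟨i, Nat.lt_of_succ_lt h⟩ < u ⟨i+1, h⟩) :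
    invLen (u * sgen n i) = invLen u + 1 := by
  classical
  set a : Fin n := ⟨i, Nat.lt_of_succ_lt h⟩
  set c : Fin n := ⟨i+1, h⟩
  have hac : a < c := by simp [a, c, Fin.lt_def]
  have hsa : sgen n i a = c := by rw [sgen_apply i h]; simp [a, c]
  have hne_ca : c ≠ a := by simp [a, c, Fin.ext_iff]
  have hsc : sgen n i c = a := by
    rw [sgen_apply i h]
    rw [if_neg hne_ca, if_pos rfl]
  set I1 := Finset.univ.filter (fun p : Fin n × Fin n => p.1 < p.2 ∧ (u * sgen n i) p.2 < (u * sgen n i) p.1) with hI1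
  set I0 := Finset.univ.filter (fun p : Fin n × Fin n => p.1 < p.2 ∧ u p.2 < u p.1) with hI0
  -- bijection between I1.erase (a,c) and I0.erase (a,c)
  have hcard : (I1.erase (a, c)).card = (I0.erase (a, c)).card := by
    apply Finset.card_nbij' (i := fun p => (sgen n i p.1, sgen n i p.2))
      (j := fun p => (sgen n i p.1, sgen n i p.2))
    · rintro ⟨x, y⟩ hm
      simp only [Finset.mem_coe, Finset.mem_erase, hI1, hI0, Finset.mem_filter, Finset.mem_univ,
        true_and] at hm ⊢
      simp only [Equiv.Perm.mul_apply] at hm ⊢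
      obtain ⟨hne, hxy, hinv⟩ := hm
      have hne' : ¬((x : ℕ) = i ∧ (y : ℕ) = i + 1) := by
        rintro ⟨h1, h2⟩
        exact hne (by simp [Prod.ext_iff, a, c, Fin.ext_iff, h1, h2])
      have := sgen_order i h x y hxy hne'
      refine ⟨?_, this, hinv⟩
      rintro hp
      have h1 : sgen n i x = a := congrArg Prod.fst hp
      have h2 : sgen n i y = c := congrArg Prod.snd hp
      have : x = sgen n i a := by rw [← h1]; rw [← Equiv.Perm.mul_apply]; rw [sgen_mul_self]; rfl
      rw [hsa] at this
      have h2' : y = sgen n i c := by rw [← h2, ← Equiv.Perm.mul_apply, sgen_mul_self]; rfl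
      rw [hsc] at h2'
      subst this h2'
      exact absurd hxy (not_lt.2 hac.le)
    · rintro ⟨x, y⟩ hm
      simp only [Finset.mem_coe, Finset.mem_erase, hI0, hI1, Finset.mem_filter, Finset.mem_univ,
        true_and] at hm ⊢
      simp only [Equiv.Perm.mul_apply] at hm ⊢
      obtain ⟨hne, hxy, hinv⟩ := hm
      have hne' : ¬((x : ℕ) = i ∧ (y : ℕ) = i + 1) := by
        rintro ⟨h1, h2⟩
        exact hne (by simp [Prod.ext_iff, a, c, Fin.ext_iff, h1, h2])
      have horder := sgen_order i h x y hxy hne'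
      have hfix : ∀ z : Fin n, sgen n i (sgen n i z) = z := by
        intro z
        rw [← Equiv.Perm.mul_apply, sgen_mul_self]; rfl
      refine ⟨?_, horder, by rwa [hfix, hfix]⟩
      rintro hp
      have h1 : sgen n i x = a := congrArg Prod.fst hp
      have h2 : sgen n i y = c := congrArg Prod.snd hp
      have hx : x = c := by rw [← hsa, ← h1, hfix]
      have hy : y = a := by rw [← hsc, ← h2, hfix]
      subst hx hy
      exact absurd hxy (not_lt.2 hac.le)
    · rintro ⟨x, y⟩ _
      simp only [← Equiv.Perm.mul_apply, sgen_mul_self, Equiv.Perm.one_apply]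
    · rintro ⟨x, y⟩ _
      simp only [← Equiv.Perm.mul_apply, sgen_mul_self, Equiv.Perm.one_apply]
  have hmem1 : (a, c) ∈ I1 := by
    simp only [hI1, Finset.mem_filter, Finset.mem_univ, true_and]
    simp only [Equiv.Perm.mul_apply, hsa, hsc]
    exact ⟨hac, hu⟩
  have hmem0 : (a, c) ∉ I0 := by
    simp only [hI0, Finset.mem_filter, Finset.mem_univ, true_and]
    rintro ⟨-, h2⟩
    exact absurd hu (not_lt.2 h2.le)
  have e0 : (I0.erase (a, c)).card = I0.card := by rw [Finset.erase_eq_of_notMem hmem0]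
  have e1 : (I1.erase (a, c)).card = I1.card - 1 := Finset.card_erase_of_mem hmem1
  have hpos : 0 < I1.card := Finset.card_pos.2 ⟨_, hmem1⟩
  show I1.card = I0.card + 1
  omega

lemma descent_down (i : ℕ) (h : i + 1 < n) (u : Equiv.Perm (Fin n))
    (hu : u ⟨i+1, h⟩ < u ⟨i, Nat.lt_of_succ_lt h⟩) :
    invLen (u * sgen n i) + 1 = invLen u := by
  have hsa : sgen n i ⟨i, Nat.lt_of_succ_lt h⟩ = ⟨i+1, h⟩ := by
    rw [sgen_apply i h, if_pos rfl]
  have hsc : sgen n i ⟨i+1, h⟩ = ⟨i, Nat.lt_of_succ_lt h⟩ := by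
    rw [sgen_apply i h, if_neg (by simp [Fin.ext_iff]), if_pos rfl]
  have key := descent_up i h (u * sgen n i) (by
    simpa only [Equiv.Perm.mul_apply, hsa, hsc] using hu)
  rw [mul_assoc, sgen_mul_self, mul_one] at key
  omega

lemma descent_dichotomy (i : ℕ) (h : i + 1 < n) (u : Equiv.Perm (Fin n)) :
    invLen (u * sgen n i) = invLen u + 1 ∨ invLen (u * sgen n i) + 1 = invLen u := by
  rcases lt_or_ge (u ⟨i, Nat.lt_of_succ_lt h⟩) (u ⟨i+1, h⟩) with hlt | hle
  · exact Or.inl (descent_up i h u hlt)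
  · refine Or.inr (descent_down i h u (lt_of_le_of_ne hle ?_))
    intro he
    exact absurd (u.injective he) (by simp [Fin.ext_iff])

lemma invLen_inv (u : Equiv.Perm (Fin n)) : invLen u⁻¹ = invLen u := by
  classical
  rw [invLen, invLen]
  apply Finset.card_nbij' (i := fun p => (u⁻¹ p.2, u⁻¹ p.1)) (j := fun p => (u p.2, u p.1))
  · rintro ⟨x, y⟩ hm
    simp only [Finset.mem_filter, Finset.mem_coe, Finset.mem_univ, true_and, Equiv.Perm.coe_inv, Equiv.apply_symm_apply] at hm ⊢
    exact ⟨hm.2, hm.1⟩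
  · rintro ⟨x, y⟩ hm
    simp only [Finset.mem_filter, Finset.mem_coe, Finset.mem_univ, true_and, Equiv.Perm.coe_inv, Equiv.symm_apply_apply] at hm ⊢
    exact ⟨hm.2, hm.1⟩
  · rintro ⟨x, y⟩ _
    simp [Equiv.Perm.coe_inv, Equiv.apply_symm_apply]
  · rintro ⟨x, y⟩ _
    simp [Equiv.Perm.coe_inv, Equiv.symm_apply_apply]

lemma invLen_sgen (i : ℕ) (h : i + 1 < n) : invLen (sgen n i) = 1 := by
  have := descent_up i h 1 (by simp [Fin.lt_def])
  rwa [one_mul, invLen_one, zero_add] at this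

lemma exists_descent (u : Equiv.Perm (Fin n)) (hu : u ≠ 1) :
    ∃ i : ℕ, i + 1 < n ∧ invLen (u * sgen n i) + 1 = invLen u := by
  by_contra hcon
  push_neg at hcon
  apply hu
  -- no descent: u is strictly monotone
  have hmono : ∀ i : ℕ, ∀ hi : i + 1 < n, u ⟨i, Nat.lt_of_succ_lt hi⟩ < u ⟨i+1, hi⟩ := by
    intro i hi
    rcases lt_or_ge (u ⟨i, Nat.lt_of_succ_lt hi⟩) (u ⟨i+1, hi⟩) with hlt | hle
    · exact hlt
    · have hne : u ⟨i+1, hi⟩ ≠ u ⟨i, Nat.lt_of_succ_lt hi⟩ := by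
        intro he; exact absurd (u.injective he) (by simp [Fin.ext_iff])
      exact absurd (descent_down i hi u (lt_of_le_of_ne hle hne)) (hcon i hi)
  have hsm : StrictMono u := by
    cases n with
    | zero => intro x; exact absurd x.2 (by omega)
    | succ m =>
      rw [Fin.strictMono_iff_lt_succ]
      intro i
      have hi : (i : ℕ) + 1 < m + 1 := by omega
      have := hmono i hi
      exact this
  have : (⟨u, fun {x y} => hsm.le_iff_le⟩ : Fin n ≃o Fin n) = OrderIso.refl (Fin n) :=
    Subsingleton.elim _ _
  ext x
  have hx := congrArg (fun (e : Fin n ≃o Fin n) => e x) this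
  simp only [Equiv.Perm.one_apply]
  have : u x = x := by simpa using hx
  exact congrArg Fin.val this

end PermLemmas

section Hecke

variable {K : Type*} [Field K] {A : Type*} [Ring A] [Algebra K A]
  {n : ℕ} {q : K} {T : Equiv.Perm (Fin n) → A} {b : Module.Basis (Equiv.Perm (Fin n)) K A}

lemma left_dichotomy (i : ℕ) (h : i + 1 < n) (w : Equiv.Perm (Fin n)) :
    invLen (sgen n i * w) = invLen w + 1 ∨ invLen (sgen n i * w) + 1 = invLen w := by
  have e : invLen (sgen n i * w) = invLen (w⁻¹ * sgen n i) := by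
    rw [← invLen_inv (sgen n i * w), mul_inv_rev, sgen_inv]
  rw [e, ← invLen_inv w]
  exact descent_dichotomy i h w⁻¹

lemma invLen_sgen_mul (i : ℕ) (w : Equiv.Perm (Fin n)) :
    invLen (sgen n i * w) = invLen (w⁻¹ * sgen n i) := by
  rw [← invLen_inv (sgen n i * w), mul_inv_rev, sgen_inv]

lemma T_left_mul (hT1 : T 1 = 1)
    (hup : ∀ (u : Equiv.Perm (Fin n)) (i : ℕ), i + 1 < n →
      invLen (u * sgen n i) = invLen u + 1 → T u * T (sgen n i) = T (u * sgen n i)) :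
    ∀ (N : ℕ) (w : Equiv.Perm (Fin n)) (i : ℕ), i + 1 < n → invLen w = N →
      invLen (sgen n i * w) = invLen w + 1 → T (sgen n i) * T w = T (sgen n i * w) := by
  intro N
  induction N using Nat.strong_induction_on with
  | _ N IH =>
    intro w i hi hN hlen
    by_cases hw : w = 1
    · subst hw; rw [hT1, mul_one, mul_one]
    · obtain ⟨j, hj, hdesc⟩ := exists_descent w hw
      set w' := w * sgen n j with hw'
      have hw'w : w' * sgen n j = w := by
        rw [hw', mul_assoc, sgen_mul_self, mul_one]
      have hlw' : invLen w' + 1 = invLen w := hdesc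
      have hTw : T w' * T (sgen n j) = T w := by
        rw [← hw'w] at hlw' ⊢
        exact hup w' j hj (by omega)
      rcases left_dichotomy i hi w' with hup' | hdown'
      · have hTsw' : T (sgen n i) * T w' = T (sgen n i * w') :=
          IH (invLen w') (by omega) w' i hi rfl hup'
        have hfin : T (sgen n i * w') * T (sgen n j) = T (sgen n i * w' * sgen n j) := by
          apply hup _ j hj
          have : sgen n i * w' * sgen n j = sgen n i * w := by rw [mul_assoc, hw'w]
          rw [this, hlen]
          omega
        rw [← hTw, ← mul_assoc, hTsw', hfin, mul_assoc, hw'w]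
      · exfalso
        rcases descent_dichotomy j hj (sgen n i * w') with h1 | h1 <;>
        · rw [mul_assoc, hw'w] at h1
          omega

lemma repr_T (hb : ∀ w, b w = T w) (w v : Equiv.Perm (Fin n)) :
    b.repr (T w) v = if w = v then 1 else 0 := by
  rw [← hb, b.repr_self, Finsupp.single_apply]

/-- The symmetrizing trace property: coefficient of the identity in `T u * T v`. -/
lemma trace_formula (hb : ∀ w, b w = T w) (hT1 : T 1 = 1)
    (hup : ∀ (u : Equiv.Perm (Fin n)) (i : ℕ), i + 1 < n →
      invLen (u * sgen n i) = invLen u + 1 → T u * T (sgen n i) = T (u * sgen n i))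
    (hdown : ∀ (u : Equiv.Perm (Fin n)) (i : ℕ), i + 1 < n →
      invLen (u * sgen n i) + 1 = invLen u →
      T u * T (sgen n i) = q • T (u * sgen n i) + (q - 1) • T u) :
    ∀ (N : ℕ) (v u : Equiv.Perm (Fin n)), invLen v = N →
      b.repr (T u * T v) 1 = if v = u⁻¹ then q ^ invLen u else 0 := by
  intro N
  induction N using Nat.strong_induction_on with
  | _ N IH =>
    intro v u hN
    by_cases hv : v = 1
    · subst hv
      rw [hT1, mul_one, repr_T hb]
      by_cases hu : u = 1
      · subst hu; simp [invLen_one]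
      · rw [if_neg hu, if_neg (fun h1 => hu (by rw [← inv_inv u, ← h1, inv_one]))]
    · -- pick a left descent of v, i.e. descent of v⁻¹
      obtain ⟨i, hi, hdesc⟩ := exists_descent v⁻¹ (fun h1 => hv (by rw [← inv_inv v, h1, inv_one]))
      set v' := sgen n i * v with hv'
      have hv'inv : v'⁻¹ = v⁻¹ * sgen n i := by rw [hv', mul_inv_rev, sgen_inv]
      have hlv' : invLen v' + 1 = invLen v := by
        rw [← invLen_inv v', hv'inv, ← invLen_inv v]
        exact hdesc
      have hvv' : sgen n i * v' = v := by rw [hv', ← mul_assoc, sgen_mul_self, one_mul]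
      have hTv : T (sgen n i) * T v' = T v := by
        have := T_left_mul hT1 hup (invLen v') v' i hi rfl (by rw [hvv']; omega)
        rwa [hvv'] at this
      have hassoc : T u * T v = (T u * T (sgen n i)) * T v' := by
        rw [mul_assoc, hTv]
      rcases descent_dichotomy i hi u with hcase | hcase
      · -- up case
        rw [hassoc, hup u i hi hcase]
        have hres := IH (invLen v') (by omega) v' (u * sgen n i) rfl
        rw [hres]
        have himp : v' ≠ (u * sgen n i)⁻¹ := by
          intro he
          have h2 : invLen v' = invLen (u * sgen n i) := by rw [he, invLen_inv]
          have h3 : v = u⁻¹ := by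
            rw [← hvv', he, mul_inv_rev, sgen_inv, ← mul_assoc, sgen_mul_self, one_mul]
          have h4 : invLen v = invLen u := by rw [h3, invLen_inv]
          omega
        have himp1 : v ≠ u⁻¹ := fun he => himp (by simp [hv', he, mul_inv_rev, sgen_inv])
        rw [if_neg himp, if_neg himp1]
      · -- down case
        rw [hassoc, hdown u i hi hcase, add_mul, smul_mul_assoc, smul_mul_assoc,
          map_add, map_smul, map_smul, Finsupp.add_apply, Finsupp.smul_apply,
          Finsupp.smul_apply]
        have hres1 := IH (invLen v') (by omega) v' (u * sgen n i) rfl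
        have hres2 := IH (invLen v') (by omega) v' u rfl
        rw [hres1, hres2]
        have himp2 : v' ≠ u⁻¹ := by
          intro he
          have : invLen v' = invLen u := by rw [he, invLen_inv]
          have hvval : v = sgen n i * u⁻¹ := by rw [← hvv', he]
          have : invLen v = invLen (u * sgen n i) := by
            rw [hvval, invLen_sgen_mul, inv_inv]
          omega
        rw [if_neg himp2, smul_zero, add_zero]
        by_cases hcond : v = u⁻¹
        · have hyes : v' = (u * sgen n i)⁻¹ := by
            rw [mul_inv_rev, sgen_inv, hv', hcond]
          rw [if_pos hyes, if_pos hcond, smul_eq_mul, ← pow_succ', hcase]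
        · have hno : v' ≠ (u * sgen n i)⁻¹ := fun he => hcond (by
            rw [← hvv', he, mul_inv_rev, sgen_inv, ← mul_assoc, sgen_mul_self, one_mul])
          rw [if_neg hno, if_neg hcond, smul_zero]

lemma trace_comm (hb : ∀ w, b w = T w) (hT1 : T 1 = 1)
    (hup : ∀ (u : Equiv.Perm (Fin n)) (i : ℕ), i + 1 < n →
      invLen (u * sgen n i) = invLen u + 1 → T u * T (sgen n i) = T (u * sgen n i))
    (hdown : ∀ (u : Equiv.Perm (Fin n)) (i : ℕ), i + 1 < n →
      invLen (u * sgen n i) + 1 = invLen u →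
      T u * T (sgen n i) = q • T (u * sgen n i) + (q - 1) • T u)
    (x y : A) : b.repr (x * y) 1 = b.repr (y * x) 1 := by
  have key : (LinearMap.mul K A).compr₂ (b.coord 1)
      = ((LinearMap.mul K A).compr₂ (b.coord 1)).flip := by
    apply b.ext
    intro u
    apply b.ext
    intro v
    simp only [LinearMap.compr₂_apply, LinearMap.mul_apply', LinearMap.flip_apply,
      Module.Basis.coord_apply]
    rw [hb u, hb v]
    rw [trace_formula (q := q) hb hT1 hup hdown (invLen v) v u rfl,
      trace_formula (q := q) hb hT1 hup hdown (invLen u) u v rfl]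
    by_cases h : v = u⁻¹
    · rw [if_pos h, if_pos (by rw [h, inv_inv]), h, invLen_inv]
    · rw [if_neg h, if_neg (fun he => h (by rw [he, inv_inv]))]
  have h1 := LinearMap.congr_fun (LinearMap.congr_fun key x) y
  simpa only [LinearMap.compr₂_apply, LinearMap.mul_apply', LinearMap.flip_apply,
    Module.Basis.coord_apply] using h1

variable (q T) in
/-- The element `E_i`. -/
def EE (i : ℕ) : A := (q + 1)⁻¹ • ((q - 1) • (1 : A) - 2 • T (sgen n i))

variable (q T) in
def prodE (l : List ℕ) : A := (l.map (EE q T)).prod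

lemma prodE_nil : prodE q T ([] : List ℕ) = 1 := rfl

lemma prodE_append (l1 l2 : List ℕ) :
    prodE q T (l1 ++ l2) = prodE q T l1 * prodE q T l2 := by
  rw [prodE, List.map_append, List.prod_append]; rfl

lemma prodE_cons (a : ℕ) (l : List ℕ) :
    prodE q T (a :: l) = EE q T a * prodE q T l := by
  rw [prodE, List.map_cons, List.prod_cons]; rfl

lemma prodE_singleton (a : ℕ) : prodE q T [a] = EE q T a := by
  rw [prodE_cons, prodE_nil, mul_one]

lemma two_smul_conv (x : A) : (2 : ℕ) • x = (2 : K) • x := by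
  have := Nat.cast_smul_eq_nsmul K (2 : ℕ) x
  rw [← this]
  norm_num

lemma T_sq (hT1 : T 1 = 1)
    (hdown : ∀ (u : Equiv.Perm (Fin n)) (i : ℕ), i + 1 < n →
      invLen (u * sgen n i) + 1 = invLen u →
      T u * T (sgen n i) = q • T (u * sgen n i) + (q - 1) • T u)
    (i : ℕ) (hi : i + 1 < n) :
    T (sgen n i) * T (sgen n i) = q • (1 : A) + (q - 1) • T (sgen n i) := by
  have h1 := hdown (sgen n i) i hi (by
    rw [sgen_mul_self, invLen_one, invLen_sgen i hi])
  rwa [sgen_mul_self, hT1] at h1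

lemma E_sq (hq : q ≠ -1) (hT1 : T 1 = 1)
    (hdown : ∀ (u : Equiv.Perm (Fin n)) (i : ℕ), i + 1 < n →
      invLen (u * sgen n i) + 1 = invLen u →
      T u * T (sgen n i) = q • T (u * sgen n i) + (q - 1) • T u)
    (i : ℕ) (hi : i + 1 < n) : EE q T i * EE q T i = 1 := by
  have hq1 : q + 1 ≠ 0 := fun h => hq (eq_neg_of_add_eq_zero_left h)
  have hss := T_sq (q := q) hT1 hdown i hi
  set s := T (sgen n i) with hs
  have expand : ((q - 1) • (1 : A) - 2 • s) * ((q - 1) • (1 : A) - 2 • s)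
      = ((q + 1) * (q + 1)) • (1 : A) := by
    simp only [two_smul_conv, sub_mul, mul_sub, smul_mul_assoc, mul_smul_comm,
      one_mul, mul_one, hss, smul_add, smul_sub, smul_smul]
    match_scalars <;> ring
  simp only [EE]
  rw [smul_mul_smul_comm, ← hs, expand, smul_smul]
  rw [show (q + 1)⁻¹ * (q + 1)⁻¹ * ((q + 1) * (q + 1)) = 1 by field_simp, one_smul]

lemma sgen_fix (i : ℕ) (h : i + 1 < n) (x : Fin n) (hx1 : (x : ℕ) ≠ i) (hx2 : (x : ℕ) ≠ i + 1) :
    sgen n i x = x := by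
  rw [sgen_apply i h, if_neg (by simp [Fin.ext_iff, hx1]), if_neg (by simp [Fin.ext_iff, hx2])]

lemma T_comm_distant (hup : ∀ (u : Equiv.Perm (Fin n)) (i : ℕ), i + 1 < n →
      invLen (u * sgen n i) = invLen u + 1 → T u * T (sgen n i) = T (u * sgen n i))
    (i j : ℕ) (hi : i + 1 < n) (hj : j + 1 < n) (hdist : i + 2 ≤ j ∨ j + 2 ≤ i) :
    T (sgen n i) * T (sgen n j) = T (sgen n j) * T (sgen n i) := by
  have hcomm : sgen n i * sgen n j = sgen n j * sgen n i := by
    ext x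
    simp only [Equiv.Perm.mul_apply]
    rcases em ((x : ℕ) = i ∨ (x : ℕ) = i + 1) with hxi | hxi
    · have hfj : sgen n j x = x := sgen_fix j hj x (by omega) (by omega)
      have hv : ((sgen n i x : Fin n) : ℕ) = i ∨ ((sgen n i x : Fin n) : ℕ) = i + 1 := by
        rw [sgen_apply i hi]
        split_ifs <;> simp_all [Fin.ext_iff] <;> omega
      have hfj2 : sgen n j (sgen n i x) = sgen n i x := sgen_fix j hj _ (by omega) (by omega)
      rw [hfj, hfj2]
    · have hfi : sgen n i x = x := sgen_fix i hi x (by omega) (by omega)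
      rcases em ((x : ℕ) = j ∨ (x : ℕ) = j + 1) with hxj | hxj
      · have hv : ((sgen n j x : Fin n) : ℕ) = j ∨ ((sgen n j x : Fin n) : ℕ) = j + 1 := by
          rw [sgen_apply j hj]
          split_ifs <;> simp_all [Fin.ext_iff] <;> omega
        have hfi2 : sgen n i (sgen n j x) = sgen n j x := sgen_fix i hi _ (by omega) (by omega)
        rw [hfi, hfi2]
      · have hfj : sgen n j x = x := sgen_fix j hj x (by omega) (by omega)
        rw [hfi, hfj, hfi]
  have hij : ∀ (a c : ℕ), a + 1 < n → c + 1 < n → (a + 2 ≤ c ∨ c + 2 ≤ a) →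
      T (sgen n a) * T (sgen n c) = T (sgen n a * sgen n c) := by
    intro a c ha hc hd
    apply hup _ c hc
    have h1 : sgen n a ⟨c, Nat.lt_of_succ_lt hc⟩ = ⟨c, Nat.lt_of_succ_lt hc⟩ :=
      sgen_fix a ha _ (by simp; omega) (by simp; omega)
    have h2 : sgen n a ⟨c + 1, hc⟩ = ⟨c + 1, hc⟩ :=
      sgen_fix a ha _ (by simp; omega) (by simp; omega)
    exact descent_up c hc (sgen n a) (by rw [h1, h2]; simp [Fin.lt_def])
  rw [hij i j hi hj hdist, hij j i hj hi (by omega), hcomm]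

lemma E_comm_distant (hup : ∀ (u : Equiv.Perm (Fin n)) (i : ℕ), i + 1 < n →
      invLen (u * sgen n i) = invLen u + 1 → T u * T (sgen n i) = T (u * sgen n i))
    (i j : ℕ) (hi : i + 1 < n) (hj : j + 1 < n) (hdist : i + 2 ≤ j ∨ j + 2 ≤ i) :
    EE q T i * EE q T j = EE q T j * EE q T i := by
  have hT := T_comm_distant hup i j hi hj hdist
  simp only [EE]
  rw [smul_mul_smul_comm, smul_mul_smul_comm]
  congr 1
  simp only [two_smul_conv (K := K), sub_mul, mul_sub, smul_mul_assoc, mul_smul_comm,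
    one_mul, mul_one, smul_sub, smul_smul, hT]
  match_scalars <;> ring

lemma E_prodE_comm (hup : ∀ (u : Equiv.Perm (Fin n)) (i : ℕ), i + 1 < n →
      invLen (u * sgen n i) = invLen u + 1 → T u * T (sgen n i) = T (u * sgen n i))
    (i : ℕ) (hi : i + 1 < n) (l : List ℕ) (hl : ∀ j ∈ l, j + 1 < n)
    (hdist : ∀ j ∈ l, i + 2 ≤ j ∨ j + 2 ≤ i) :
    EE q T i * prodE q T l = prodE q T l * EE q T i := by
  induction l with
  | nil => rw [prodE_nil, one_mul, mul_one]
  | cons a l IH =>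
    rw [prodE_cons, ← mul_assoc,
      E_comm_distant hup i a hi (hl a (by simp)) (hdist a (by simp)), mul_assoc,
      IH (fun j hj => hl j (by simp [hj])) (fun j hj => hdist j (by simp [hj])), mul_assoc]

lemma prodE_comm (hup : ∀ (u : Equiv.Perm (Fin n)) (i : ℕ), i + 1 < n →
      invLen (u * sgen n i) = invLen u + 1 → T u * T (sgen n i) = T (u * sgen n i))
    (l1 l2 : List ℕ) (h1 : ∀ i ∈ l1, i + 1 < n) (h2 : ∀ j ∈ l2, j + 1 < n)
    (hdist : ∀ i ∈ l1, ∀ j ∈ l2, i + 2 ≤ j ∨ j + 2 ≤ i) :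
    prodE q T l1 * prodE q T l2 = prodE q T l2 * prodE q T l1 := by
  induction l1 with
  | nil => rw [prodE_nil, one_mul, mul_one]
  | cons a l IH =>
    rw [prodE_cons, mul_assoc,
      IH (fun i hi => h1 i (by simp [hi])) (fun i hi => fun j hj => hdist i (by simp [hi]) j hj),
      ← mul_assoc, E_prodE_comm hup a (h1 a (by simp)) l2 h2 (hdist a (by simp)),
      mul_assoc, ← prodE_cons]

variable (q T) in
def rowE (a c : ℕ) : A := prodE q T (List.range' a (c - a))

def stairList (t M p : ℕ) : List ℕ :=
  (List.range p).flatMap (fun r => List.range' (t - r) ((M - r) - (t - r)))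

lemma rowE_empty (a c : ℕ) (h : c ≤ a) : rowE q T a c = 1 := by
  rw [rowE, Nat.sub_eq_zero_of_le h]
  rfl

lemma rowE_split (a c d : ℕ) (h1 : a ≤ c) (h2 : c ≤ d) :
    rowE q T a d = rowE q T a c * rowE q T c d := by
  rw [rowE, rowE, rowE, ← prodE_append]
  congr 1
  have := List.range'_append (s := a) (m := c - a) (n := d - c) (step := 1)
  rw [show a + 1 * (c - a) = c by omega] at this
  rw [this]
  congr 1
  omega

lemma rowE_single (a : ℕ) : rowE q T a (a + 1) = EE q T a := by
  rw [rowE, show a + 1 - a = 1 by omega, List.range'_one, prodE_singleton]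

lemma mem_row_letters (a c j : ℕ) (hj : j ∈ List.range' a (c - a)) : a ≤ j ∧ j < c := by
  rw [List.mem_range'_1] at hj
  omega

lemma E_mul_rowE (hq : q ≠ -1) (hT1 : T 1 = 1)
    (hdown : ∀ (u : Equiv.Perm (Fin n)) (i : ℕ), i + 1 < n →
      invLen (u * sgen n i) + 1 = invLen u →
      T u * T (sgen n i) = q • T (u * sgen n i) + (q - 1) • T u)
    (a c : ℕ) (h : a < c) (hc : c < n) :
    EE q T a * rowE q T a c = rowE q T (a + 1) c := by
  have hsplit : rowE q T a c = EE q T a * rowE q T (a+1) c := by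
    rw [← rowE_single a, ← rowE_split a (a+1) c (by omega) (by omega)]
  rw [hsplit, ← mul_assoc, E_sq hq hT1 hdown a (by omega), one_mul]

lemma stairList_zero (t M : ℕ) : stairList t M 0 = [] := rfl

lemma stairList_cons (t M p : ℕ) :
    stairList t M (p + 1) = List.range' t (M - t) ++ stairList (t - 1) (M - 1) p := by
  rw [stairList, List.range_succ_eq_map, List.flatMap_cons, List.flatMap_map]
  congr 1
  rw [stairList]
  congr 1
  funext r
  have e1 : t - (r + 1) = t - 1 - r := by omega
  rw [e1]
  congr 1
  omega

lemma stairList_snoc (t M p : ℕ) :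
    stairList t M (p + 1) = stairList t M p ++ List.range' (t - p) ((M - p) - (t - p)) := by
  rw [stairList, stairList, List.range_succ, List.flatMap_append, List.flatMap_cons,
    List.flatMap_nil, List.append_nil]

lemma mem_stairList (t M p j : ℕ) (hj : j ∈ stairList t M p) : j < M ∧ t < j + p := by
  rw [stairList, List.mem_flatMap] at hj
  obtain ⟨r, hr, hjr⟩ := hj
  rw [List.mem_range] at hr
  rw [List.mem_range'_1] at hjr
  omega

lemma step_lemma (hq : q ≠ -1) (hT1 : T 1 = 1)
    (hup : ∀ (u : Equiv.Perm (Fin n)) (i : ℕ), i + 1 < n →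
      invLen (u * sgen n i) = invLen u + 1 → T u * T (sgen n i) = T (u * sgen n i))
    (hdown : ∀ (u : Equiv.Perm (Fin n)) (i : ℕ), i + 1 < n →
      invLen (u * sgen n i) + 1 = invLen u →
      T u * T (sgen n i) = q • T (u * sgen n i) + (q - 1) • T u) :
    ∀ (p t M c : ℕ), t < M → M < n → (c = 0 ∨ c + p ≤ t + 1) →
    rowE q T c (t + 1) * prodE q T (stairList t M p)
      = prodE q T (stairList (t + 1) M p) * rowE q T c (t + 1 - p) := by
  intro p
  induction p with
  | zero =>
    intro t M c _ _ _
    rw [stairList_zero, stairList_zero, prodE_nil, mul_one, one_mul, Nat.sub_zero]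
  | succ p IH =>
    intro t M c htM hMn hcond
    have hc : c ≤ t := by omega
    rw [stairList_cons t M p, stairList_cons (t+1) M p, prodE_append, prodE_append]
    have hrow0 : prodE q T (List.range' t (M - t)) = rowE q T t M := rfl
    have hrow0' : prodE q T (List.range' (t+1) (M - (t+1))) = rowE q T (t+1) M := rfl
    rw [hrow0, hrow0', show t + 1 - 1 = t by omega]
    rcases Nat.eq_zero_or_pos t with ht0 | htpos
    · -- t = 0, hence c = 0
      have hc0 : c = 0 := by omega
      subst ht0 hc0
      rw [show (0:ℕ) - 1 = 0 from rfl, rowE_single 0, ← mul_assoc,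
        E_mul_rowE hq hT1 hdown 0 M (by omega) hMn,
        show 0 + 1 - (p + 1) = 0 by omega, rowE_empty 0 0 le_rfl, mul_one]
    · -- t ≥ 1
      have hsplit : rowE q T c (t + 1) = rowE q T c t * EE q T t := by
        rw [← rowE_single t, ← rowE_split c t (t+1) hc (by omega)]
      rw [hsplit]
      -- (rowE c t * EE t) * (rowE t M * S) = rowE c t * (EE t * rowE t M) * S
      rw [mul_assoc (rowE q T c t), ← mul_assoc (EE q T t), E_mul_rowE hq hT1 hdown t M htM hMn]
      -- now : rowE c t * ((rowE (t+1) M) * S)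
      have hcomm : rowE q T c t * rowE q T (t+1) M = rowE q T (t+1) M * rowE q T c t := by
        apply prodE_comm hup
        · intro i hi
          have := mem_row_letters c t i hi
          omega
        · intro j hj
          have := mem_row_letters (t+1) M j hj
          omega
        · intro i hi j hj
          have h1 := mem_row_letters c t i hi
          have h2 := mem_row_letters (t+1) M j hj
          omega
      rw [← mul_assoc (rowE q T c t), hcomm, mul_assoc (rowE q T (t+1) M)]
      -- apply IH at (t-1, M-1, c)
      have hIH := IH (t-1) (M-1) c (by omega) (by omega) (by omega)
      rw [show t - 1 + 1 = t by omega] at hIH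
      rw [hIH, ← mul_assoc]
      congr 2
      omega

variable (n) in
def fixedFrom (m : ℕ) : Set (Equiv.Perm (Fin n)) := {w | ∀ k : Fin n, m ≤ (k : ℕ) → w k = k}

lemma mul_EE_expand (j : ℕ) (x : A) :
    x * EE q T j = (q + 1)⁻¹ • ((q - 1) • x - (2:K) • (x * T (sgen n j))) := by
  simp only [EE, mul_smul_comm, mul_sub, mul_one, two_smul_conv (K := K)]

lemma fixed_mul_sgen (j : ℕ) (hj : j + 1 < n) (w : Equiv.Perm (Fin n))
    (hw : w ∈ fixedFrom n j) (hup : ∀ (u : Equiv.Perm (Fin n)) (i : ℕ), i + 1 < n →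
      invLen (u * sgen n i) = invLen u + 1 → T u * T (sgen n i) = T (u * sgen n i)) :
    T w * T (sgen n j) = T (w * sgen n j) := by
  apply hup w j hj
  apply descent_up j hj w
  rw [hw ⟨j, Nat.lt_of_succ_lt hj⟩ (by simp), hw ⟨j+1, hj⟩ (by simp)]
  simp [Fin.lt_def]

lemma good_repr_zero (hb : ∀ w, b w = T w)
    (hup : ∀ (u : Equiv.Perm (Fin n)) (i : ℕ), i + 1 < n →
      invLen (u * sgen n i) = invLen u + 1 → T u * T (sgen n i) = T (u * sgen n i))
    (j : ℕ) (hj : j + 1 < n) (x : A)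
    (hx : x ∈ Submodule.span K (T '' fixedFrom n j)) :
    b.repr (x * T (sgen n j)) 1 = 0 := by
  induction hx using Submodule.span_induction with
  | mem y hy =>
    obtain ⟨w, hw, rfl⟩ := hy
    rw [fixed_mul_sgen j hj w hw hup, repr_T hb]
    rw [if_neg]
    intro he
    have hwe : w = sgen n j := by
      have := eq_inv_of_mul_eq_one_left he
      rwa [sgen_inv] at this
    have hfix := hw ⟨j, Nat.lt_of_succ_lt hj⟩ (by simp)
    rw [hwe, sgen_apply j hj, if_pos rfl] at hfix
    exact absurd (congrArg Fin.val hfix) (by simp)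
  | zero => rw [zero_mul, map_zero]; rfl
  | add y z _ _ hy hz => rw [add_mul, map_add, Finsupp.add_apply, hy, hz, add_zero]
  | smul c y _ hy => rw [smul_mul_assoc, map_smul, Finsupp.smul_apply, hy, smul_zero]

lemma good_span_step
    (hup : ∀ (u : Equiv.Perm (Fin n)) (i : ℕ), i + 1 < n →
      invLen (u * sgen n i) = invLen u + 1 → T u * T (sgen n i) = T (u * sgen n i))
    (j m : ℕ) (hj : j + 1 < n) (hm : j + 2 ≤ m) (x : A)
    (hx : x ∈ Submodule.span K (T '' fixedFrom n j)) :
    x * EE q T j ∈ Submodule.span K (T '' fixedFrom n m) := by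
  induction hx using Submodule.span_induction with
  | mem y hy =>
    obtain ⟨w, hw, rfl⟩ := hy
    rw [mul_EE_expand, fixed_mul_sgen j hj w hw hup]
    apply Submodule.smul_mem
    apply Submodule.sub_mem
    · apply Submodule.smul_mem
      apply Submodule.subset_span
      exact ⟨w, fun k hk => hw k (by omega), rfl⟩
    · apply Submodule.smul_mem
      apply Submodule.subset_span
      refine ⟨w * sgen n j, fun k hk => ?_, rfl⟩
      have hsf : sgen n j k = k := sgen_fix j hj k (by omega) (by omega)
      rw [Equiv.Perm.mul_apply, hsf]
      exact hw k (by omega)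
  | zero => rw [zero_mul]; exact Submodule.zero_mem _
  | add y z _ _ hy hz => rw [add_mul]; exact Submodule.add_mem _ hy hz
  | smul c y _ hy => rw [smul_mul_assoc]; exact Submodule.smul_mem _ _ hy

lemma good_lemma (hq : q ≠ -1) (hb : ∀ w, b w = T w) (hT1 : T 1 = 1)
    (hup : ∀ (u : Equiv.Perm (Fin n)) (i : ℕ), i + 1 < n →
      invLen (u * sgen n i) = invLen u + 1 → T u * T (sgen n i) = T (u * sgen n i)) :
    ∀ (l : List ℕ) (m : ℕ),
    (∀ j ∈ l, j + 1 < n ∧ j + 2 ≤ m) → l.Pairwise (fun a c => a + 2 ≤ c) →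
    prodE q T l ∈ Submodule.span K (T '' fixedFrom n m) ∧
      b.repr (prodE q T l) 1 = ((q - 1) * (q + 1)⁻¹) ^ l.length := by
  intro l
  induction l using List.reverseRecOn with
  | nil =>
    intro m _ _
    constructor
    · rw [prodE_nil, ← hT1]
      exact Submodule.subset_span ⟨1, fun k _ => rfl, rfl⟩
    · rw [prodE_nil, ← hT1, repr_T hb, if_pos rfl, List.length_nil, pow_zero]
  | append_singleton l j IHl =>
    intro m hval hpair
    rw [List.pairwise_append] at hpair
    have hj : j + 1 < n := (hval j (by simp)).1
    have hjm : j + 2 ≤ m := (hval j (by simp)).2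
    have hIH := IHl j (fun i hi => ⟨(hval i (by simp [hi])).1,
      hpair.2.2 i hi j (by simp)⟩) hpair.1
    obtain ⟨hspan, hrepr⟩ := hIH
    rw [prodE_append, prodE_singleton]
    constructor
    · exact good_span_step hup j m hj hjm _ hspan
    · rw [mul_EE_expand, map_smul, Finsupp.smul_apply, map_sub, Finsupp.sub_apply,
        map_smul, map_smul, Finsupp.smul_apply, Finsupp.smul_apply,
        good_repr_zero hb hup j hj _ hspan, hrepr, List.length_append,
        List.length_singleton, smul_zero, sub_zero]
      rw [smul_eq_mul, smul_eq_mul, pow_succ]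
      ring

lemma evac_eq_stair : evacWord n = stairList 0 (n - 1) (n - 1) := by
  rw [evacWord, stairList]
  have h1 : (List.range (n-1)).reverse = (List.range (n-1)).map (fun i => n - 2 - i) := by
    rw [List.range_eq_range', List.reverse_range', ← List.range_eq_range']
    apply List.map_congr_left
    intro a _
    omega
  rw [h1, List.map_map, List.flatMap_def]
  congr 1
  apply List.map_congr_left
  intro a ha
  rw [List.mem_range] at ha
  simp only [Function.comp_apply]
  rw [List.range_eq_range']
  congr 1 <;> omega

variable (n) in
def Dlist (t : ℕ) : List ℕ :=
  (List.range (t - (n - 1) / 2)).map (fun s => (2 * ((n - 1) / 2) + 2 - n) + 2 * s)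

lemma Dlist_zero : Dlist n 0 = [] := by
  rw [Dlist, Nat.zero_sub, List.range_zero, List.map_nil]

lemma Dlist_succ (t : ℕ) (ht : t + 1 ≤ n - 1) :
    Dlist n (t + 1) = Dlist n t
      ++ List.range' (t - (n - 2 - t)) ((t + 1 - (n - 2 - t)) - (t - (n - 2 - t))) := by
  rcases le_or_gt (2 * t + 3) n with hno | hyes
  · -- no leftover
    rw [show (t + 1 - (n - 2 - t)) - (t - (n - 2 - t)) = 0 by omega]
    rw [show List.range' (t - (n - 2 - t)) 0 = [] from rfl, List.append_nil]
    rw [Dlist, Dlist, show (t + 1) - (n - 1) / 2 = t - (n - 1) / 2 by omega]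
  · -- leftover
    have hcnt : (t + 1) - (n - 1) / 2 = (t - (n - 1) / 2) + 1 := by omega
    rw [Dlist, Dlist, hcnt, List.range_succ, List.map_append]
    congr 1
    rw [show (t + 1 - (n - 2 - t)) - (t - (n - 2 - t)) = 1 by omega, List.range'_one]
    rw [List.map_singleton]
    congr 1
    omega

lemma mem_Dlist (t j : ℕ) (ht : t ≤ n - 1) (hj : j ∈ Dlist n t) :
    j + 1 < n ∧ j + 2 ≤ 2 * t + 2 - n ∧ n ≤ 2 * t := by
  rw [Dlist, List.mem_map] at hj
  obtain ⟨s, hs, rfl⟩ := hj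
  rw [List.mem_range] at hs
  omega

lemma stage_lemma (hq : q ≠ -1) (hb : ∀ w, b w = T w) (hT1 : T 1 = 1)
    (hup : ∀ (u : Equiv.Perm (Fin n)) (i : ℕ), i + 1 < n →
      invLen (u * sgen n i) = invLen u + 1 → T u * T (sgen n i) = T (u * sgen n i))
    (hdown : ∀ (u : Equiv.Perm (Fin n)) (i : ℕ), i + 1 < n →
      invLen (u * sgen n i) + 1 = invLen u →
      T u * T (sgen n i) = q • T (u * sgen n i) + (q - 1) • T u) :
    ∀ t, t ≤ n - 1 →
    b.repr (prodE q T (evacWord n)) 1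
      = b.repr (prodE q T (Dlist n t) * prodE q T (stairList t (n - 1) (n - 1 - t))) 1 := by
  intro t
  induction t with
  | zero =>
    intro _
    rw [Dlist_zero, prodE_nil, one_mul, evac_eq_stair, Nat.sub_zero]
  | succ t IH =>
    intro ht
    have h0 := IH (by omega)
    have hp1 : n - 1 - t = (n - 2 - t) + 1 := by omega
    have hp2 : n - 1 - (t + 1) = n - 2 - t := by omega
    set p := n - 2 - t with hp
    set c := t - p with hc
    rw [hp1, stairList_snoc, prodE_append] at h0
    have hB : prodE q T (List.range' (t - p) ((n - 1 - p) - (t - p))) = rowE q T c (t + 1) := by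
      rw [rowE, show (t + 1) - c = (n - 1 - p) - (t - p) by omega]
    rw [hB] at h0
    rw [h0, hp2]
    -- notation
    set D := prodE q T (Dlist n t) with hD
    set S1 := prodE q T (stairList t (n - 1) p) with hS1
    set B := rowE q T c (t + 1) with hBdef
    -- cyclic rotation of B to the front
    rw [← mul_assoc, trace_comm (q := q) hb hT1 hup hdown (D * S1) B]
    -- commute B past D
    have hcommBD : B * D = D * B := by
      rw [hBdef, hD, rowE]
      apply prodE_comm hup
      · intro i hi
        have := mem_row_letters c (t + 1) i (by rwa [hc] at hi)
        omega
      · intro j hj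
        have := mem_Dlist t j (by omega) hj
        omega
      · intro i hi j hj
        have h1 := mem_row_letters c (t + 1) i (by rwa [hc] at hi)
        have h2 := mem_Dlist t j (by omega) hj
        omega
    rw [← mul_assoc, hcommBD, mul_assoc]
    -- apply the step lemma
    have hstep := step_lemma hq hT1 hup hdown p t (n - 1) c (by omega) (by omega) (by omega)
    rw [hBdef, hS1, hstep]
    -- commute the leftover row past the new staircase
    set S2 := prodE q T (stairList (t + 1) (n - 1) p) with hS2
    set L := rowE q T c (t + 1 - p) with hL
    have hcommLS : S2 * L = L * S2 := by
      rw [hS2, hL, rowE]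
      apply prodE_comm hup
      · intro j hj
        have := mem_stairList (t + 1) (n - 1) p j hj
        omega
      · intro i hi
        have := mem_row_letters c (t + 1 - p) i (by rwa [hc] at hi)
        omega
      · intro j hj i hi
        have h1 := mem_stairList (t + 1) (n - 1) p j hj
        have h2 := mem_row_letters c (t + 1 - p) i (by rwa [hc] at hi)
        omega
    rw [hcommLS, ← mul_assoc]
    have hDL : D * L = prodE q T (Dlist n (t + 1)) := by
      rw [hD, hL, rowE, ← prodE_append]
      congr 1
      rw [Dlist_succ t ht, ← hp, ← hc]
    rw [hDL]

end Hecke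


/-- In the Hecke algebra `H_n(q)` (presented by a `K`-basis
`{T_w : w ∈ S_n}` with `T_1 = 1` and the standard multiplication rule by generators),
expanding `E₁E₂⋯E_{n-1}·E₁E₂⋯E_{n-2}⋯E₁E₂·E₁ = Σ_w c_w(q) T_w` with
`E_i = (1/(q+1))(q − 1 − 2T_i)`, the coefficient of the identity permutation is
`c_id(q) = ((q−1)/(q+1))^⌊n/2⌋`. -/
theorem stmt15 {K : Type*} [Field K] [CharZero K] {A : Type*} [Ring A] [Algebra K A]
    (n : ℕ) (q : K) (hq : q ≠ -1)
    (T : Equiv.Perm (Fin n) → A) (b : Module.Basis (Equiv.Perm (Fin n)) K A)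
    (hb : ∀ w, b w = T w) (hT1 : T 1 = 1)
    (hup : ∀ (u : Equiv.Perm (Fin n)) (i : ℕ), i + 1 < n →
      invLen (u * sgen n i) = invLen u + 1 → T u * T (sgen n i) = T (u * sgen n i))
    (hdown : ∀ (u : Equiv.Perm (Fin n)) (i : ℕ), i + 1 < n →
      invLen (u * sgen n i) + 1 = invLen u →
      T u * T (sgen n i) = q • T (u * sgen n i) + (q - 1) • T u) :
    b.repr (((evacWord n).map
        (fun i => (q + 1)⁻¹ • ((q - 1) • (1 : A) - 2 • T (sgen n i)))).prod) 1 =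
      ((q - 1) / (q + 1)) ^ (n / 2) := by
  have hmain := stage_lemma (q := q) (b := b) hq hb hT1 hup hdown (n - 1) le_rfl
  rw [Nat.sub_self, stairList_zero, prodE_nil, mul_one] at hmain
  have hgood := good_lemma (q := q) (b := b) hq hb hT1 hup (Dlist n (n - 1)) (n + 2)
    (fun j hj => by have := mem_Dlist (n - 1) j le_rfl hj; omega)
    (by
      rw [Dlist]
      apply List.Pairwise.map _ _ List.pairwise_lt_range
      intro x y hxy
      omega)
  show b.repr (prodE q T (evacWord n)) 1 = _
  rw [hmain, hgood.2, Dlist, List.length_map, List.length_range,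
    show (n - 1) - (n - 1) / 2 = n / 2 by omega, div_eq_mul_inv]
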